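/- For each n ≥ 1, the total number of leaves over all rooted plane trees with n vertices equals the coefficient of z^n in (z/2)(1 + 1/√(1-4z)), which equals (1/2)·binom(2n-2, n-1) for n ≥ 2 and equals 1 for n = 1. -/

import Mathlib

/-- Rooted plane (ordered) trees: a root together with a (possibly empty) list of subtrees. -/
inductive PlaneTree : Type
  | node : List PlaneTree → PlaneTree

/-- Number of vertices of a rooted plane tree. -/
def PlaneTree.size : PlaneTree → ℕ
  | .node cs => 1 + (cs.attach.map (fun t => PlaneTree.size t.1)).sum
decreasing_by
  have := List.sizeOf_lt_of_mem t.2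
  simp [PlaneTree.node.sizeOf_spec] at *
  omega

/-- The protection number of a rooted plane tree: `0` if the root is a leaf, otherwise
`1` plus the minimum of the protection numbers of the root's subtrees. -/
def PlaneTree.protectionNumber : PlaneTree → ℕ
  | .node [] => 0
  | .node (c :: cs) =>
      1 + List.foldl min (PlaneTree.protectionNumber c)
            (cs.attach.map (fun t => PlaneTree.protectionNumber t.1))
decreasing_by
  · simp; omega
  · have := List.sizeOf_lt_of_mem t.2
    simp at *
    omega

/-- Number of leaves of a rooted plane tree. -/
def PlaneTree.leafCount : PlaneTree → ℕ
  | .node [] => 1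
  | .node (c :: cs) =>
      ((c :: cs).attach.map (fun t => PlaneTree.leafCount t.1)).sum
decreasing_by
  have := List.sizeOf_lt_of_mem t.2
  simp at *
  omega

open Finset

section Identities
open Finset Nat

lemma catalan_succ_range (m : ℕ) :
    catalan (m + 1) = ∑ i ∈ Finset.range (m + 1), catalan i * catalan (m - i) := by
  rw [catalan_succ]
  exact Fin.sum_univ_eq_sum_range (fun i => catalan i * catalan (m - i)) (m + 1)

lemma key_identity (m : ℕ) :
    2 * ∑ i ∈ Finset.range (m + 1), Nat.centralBinom i * catalan (m - i)
      = Nat.centralBinom (m + 1) := by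
  have hB : ∀ i : ℕ, Nat.centralBinom i = (i + 1) * catalan i :=
    fun i => (succ_mul_catalan_eq_centralBinom i).symm
  have h1 : ∑ i ∈ Finset.range (m + 1), (m - i + 1) * catalan (m - i) * catalan i
      = ∑ i ∈ Finset.range (m + 1), (i + 1) * catalan i * catalan (m - i) := by
    rw [← Finset.sum_range_reflect (fun i => (i + 1) * catalan i * catalan (m - i)) (m + 1)]
    refine Finset.sum_congr rfl fun j hj => ?_
    rw [Finset.mem_range] at hj
    have e1 : m + 1 - 1 - j = m - j := by omega
    have e2 : m - (m - j) = j := by omega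
    rw [e1, e2]
  have h2 : ∑ i ∈ Finset.range (m + 1), Nat.centralBinom i * catalan (m - i)
      = ∑ i ∈ Finset.range (m + 1), (i + 1) * catalan i * catalan (m - i) := by
    refine Finset.sum_congr rfl fun i _ => ?_
    rw [hB i, mul_assoc]
  rw [h2, two_mul]
  nth_rewrite 2 [← h1]
  have h3 : ∑ i ∈ Finset.range (m + 1),
        ((i + 1) * catalan i * catalan (m - i) + (m - i + 1) * catalan (m - i) * catalan i)
      = ∑ i ∈ Finset.range (m + 1), (m + 2) * (catalan i * catalan (m - i)) := by
    refine Finset.sum_congr rfl fun i hi => ?_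
    rw [Finset.mem_range] at hi
    have e : i + 1 + (m - i + 1) = m + 2 := by omega
    rw [← e]
    ring
  rw [← Finset.sum_add_distrib, h3, ← Finset.mul_sum, ← catalan_succ_range,
    ← succ_mul_catalan_eq_centralBinom]

lemma centralBinom_conv : ∀ n : ℕ,
    ∑ i ∈ Finset.range (n + 1), Nat.centralBinom i * Nat.centralBinom (n - i) = 4 ^ n := by
  intro n
  induction n with
  | zero => simp [Nat.centralBinom_zero]
  | succ n ih =>
    set B := Nat.centralBinom with hBdef
    -- reflection: 2 * weighted sum
    have refl : ∀ (N : ℕ) (g : ℕ → ℕ),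
        ∑ i ∈ Finset.range (N + 1), (N - i + 1) * g (N - i) * g i
          = ∑ i ∈ Finset.range (N + 1), (i + 1) * g i * g (N - i) := by
      intro N g
      rw [← Finset.sum_range_reflect (fun i => (i + 1) * g i * g (N - i)) (N + 1)]
      refine Finset.sum_congr rfl fun j hj => ?_
      rw [Finset.mem_range] at hj
      have e1 : N + 1 - 1 - j = N - j := by omega
      have e2 : N - (N - j) = j := by omega
      rw [e1, e2]
    -- (N + 3) * T (N+1) = 2 * ∑ (i+1) B i B (N+1-i)  where N := n
    have wsum : ∀ N : ℕ, 2 * ∑ i ∈ Finset.range (N + 1), (i + 1) * B i * B (N - i)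
        = (N + 2) * ∑ i ∈ Finset.range (N + 1), B i * B (N - i) := by
      intro N
      rw [two_mul]
      nth_rewrite 2 [← refl N B]
      rw [← Finset.sum_add_distrib, Finset.mul_sum]
      refine Finset.sum_congr rfl fun i hi => ?_
      rw [Finset.mem_range] at hi
      have e : i + 1 + (N - i + 1) = N + 2 := by omega
      rw [← e]
      ring
    -- abbreviations
    set T0 := ∑ i ∈ Finset.range (n + 1), B i * B (n - i) with hT0
    set T1 := ∑ i ∈ Finset.range (n + 2), B i * B (n + 1 - i) with hT1
    set S := ∑ i ∈ Finset.range (n + 1), B (i + 1) * B (n - i) with hS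
    set X := ∑ i ∈ Finset.range (n + 1), i * B i * B (n - i) with hX
    -- peel T1
    have hT1S : T1 = S + B (n + 1) := by
      rw [hT1, Finset.sum_range_succ']
      congr 1
      · refine Finset.sum_congr rfl fun i hi => ?_
        rw [Finset.mem_range] at hi
        have e : n + 1 - (i + 1) = n - i := by omega
        rw [e]
      · simp [hBdef, Nat.centralBinom_zero]
    -- 2 X = n * T0
    have hXT : 2 * X = n * T0 := by
      have split : ∑ i ∈ Finset.range (n + 1), (i + 1) * B i * B (n - i) = X + T0 := by
        rw [hX, hT0, ← Finset.sum_add_distrib]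
        refine Finset.sum_congr rfl fun i _ => ?_
        ring
      have hw := wsum n
      rw [split, ← hT0] at hw
      have e1 : 2 * (X + T0) = 2 * X + 2 * T0 := by ring
      have e2 : (n + 2) * T0 = n * T0 + 2 * T0 := by ring
      rw [e1, e2] at hw
      exact Nat.add_right_cancel hw
    -- peel W
    have hW : ∑ i ∈ Finset.range (n + 2), (i + 1) * B i * B (n + 1 - i)
        = (4 * X + 2 * T0) + S + B (n + 1) := by
      rw [Finset.sum_range_succ']
      have hterm : ∀ i ∈ Finset.range (n + 1),
          (i + 1 + 1) * B (i + 1) * B (n + 1 - (i + 1))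
            = (2 * (2 * i + 1) * B i + B (i + 1)) * B (n - i) := by
        intro i hi
        rw [Finset.mem_range] at hi
        have e : n + 1 - (i + 1) = n - i := by omega
        rw [e]
        have hrec : (i + 1 + 1) * B (i + 1) = 2 * (2 * i + 1) * B i + B (i + 1) := by
          have := Nat.succ_mul_centralBinom_succ i
          rw [← hBdef] at this
          calc (i + 1 + 1) * B (i + 1) = (i + 1) * B (i + 1) + B (i + 1) := by ring
            _ = 2 * (2 * i + 1) * B i + B (i + 1) := by rw [this]
        rw [hrec]
      rw [Finset.sum_congr rfl hterm]
      have expand : ∑ i ∈ Finset.range (n + 1),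
          (2 * (2 * i + 1) * B i + B (i + 1)) * B (n - i)
          = (4 * X + 2 * T0) + S := by
        rw [hX, hT0, hS, Finset.mul_sum, Finset.mul_sum, ← Finset.sum_add_distrib,
          ← Finset.sum_add_distrib]
        refine Finset.sum_congr rfl fun i _ => ?_
        ring
      rw [expand]
      simp [hBdef, Nat.centralBinom_zero]
    -- combine with wsum (n+1)
    have hw1 := wsum (n + 1)
    rw [hW, ← hT1] at hw1
    -- hw1 : 2 * ((4X + 2T0) + S + B (n+1)) = (n + 3) * T1
    rw [hT1S] at hw1 ⊢
    -- express everything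
    have key : (n + 1) * (S + B (n + 1)) = (n + 1) * (4 * T0) := by
      have e : 2 * ((4 * X + 2 * T0) + S + B (n + 1))
          = 4 * (2 * X) + 4 * T0 + 2 * (S + B (n + 1)) := by ring
      rw [e, hXT] at hw1
      have e2 : (n + 1 + 2) * (S + B (n + 1))
          = (n + 1) * (S + B (n + 1)) + 2 * (S + B (n + 1)) := by ring
      rw [e2] at hw1
      have := Nat.add_right_cancel hw1
      rw [← this]
      ring
    have hfin := Nat.eq_of_mul_eq_mul_left (by omega : 0 < n + 1) key
    rw [hfin, ih]
    ring

end Identities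

namespace PlaneTree

lemma size_node (l : List PlaneTree) : (node l).size = 1 + (l.map size).sum := by
  rw [size]
  congr 1
  exact congrArg List.sum (List.attach_map_val (l := l) (f := size))

lemma leafCount_node_cons (c : PlaneTree) (cs : List PlaneTree) :
    (node (c :: cs)).leafCount = ((c :: cs).map leafCount).sum := by
  rw [leafCount]
  exact congrArg List.sum (List.attach_map_val (f := leafCount))

lemma one_le_size (t : PlaneTree) : 1 ≤ t.size := by
  cases t with
  | node l => rw [size_node]; omega

lemma size_eq_one_iff (t : PlaneTree) : t.size = 1 ↔ t = node [] := by
  constructor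
  · cases t with
    | node l =>
      cases l with
      | nil => intro _; rfl
      | cons c cs =>
        rw [size_node]
        intro h
        simp only [List.map_cons, List.sum_cons] at h
        have := one_le_size c
        omega
  · rintro rfl; rw [size_node]; simp

/-- Glue a tree `c` as new first child of `d`. -/
def glue : PlaneTree × PlaneTree → PlaneTree
  | (c, node ds) => node (c :: ds)

lemma glue_injective : Function.Injective glue := by
  rintro ⟨c, ⟨ds⟩⟩ ⟨c', ⟨ds'⟩⟩ h
  simp only [glue] at h
  cases h
  rfl

lemma size_glue (c d : PlaneTree) : (glue (c, d)).size = c.size + d.size := by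
  cases d with
  | node ds =>
    simp only [glue, size_node, List.map_cons, List.sum_cons]
    ring

lemma leafCount_glue (c d : PlaneTree) :
    (glue (c, d)).leafCount + (if d.size = 1 then 1 else 0)
      = c.leafCount + d.leafCount := by
  cases d with
  | node ds =>
    cases ds with
    | nil =>
      simp only [glue, leafCount_node_cons, List.map_cons, List.map_nil, List.sum_cons,
        List.sum_nil, size_eq_one_iff]
      norm_num
      rw [leafCount]
    | cons e es =>
      have hne : (node (e :: es)).size ≠ 1 := by
        simp [size_eq_one_iff]
      rw [if_neg hne]
      simp only [glue, leafCount_node_cons, List.map_cons, List.sum_cons, add_zero]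

/-- Every tree of size ≥ 2 is a glue. -/
lemma exists_glue {t : PlaneTree} (h : 2 ≤ t.size) :
    ∃ c d : PlaneTree, t = glue (c, d) := by
  cases t with
  | node l =>
    cases l with
    | nil => rw [size_node] at h; simp at h
    | cons c cs => exact ⟨c, node cs, rfl⟩

lemma finite_size_eq : ∀ n : ℕ, {t : PlaneTree | t.size = n}.Finite := by
  intro n
  induction n using Nat.strong_induction_on with
  | _ n ih =>
    match n, ih with
    | 0, _ =>
      convert Set.finite_empty
      ext t
      have := one_le_size t
      simp only [Set.mem_setOf_eq, Set.mem_empty_iff_false, iff_false]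
      omega
    | 1, _ =>
      apply Set.Finite.subset (Set.finite_singleton (node []))
      intro t ht
      simp only [Set.mem_setOf_eq] at ht
      simp [← size_eq_one_iff, ht]
    | (m + 2), ih =>
      apply Set.Finite.subset
        (Set.Finite.image glue
          (Set.Finite.biUnion (Set.finite_Icc 1 (m + 1))
            (fun k hk => Set.Finite.prod (ih k (by rw [Set.mem_Icc] at hk; omega))
              (ih (m + 2 - k) (by rw [Set.mem_Icc] at hk; omega)))))
      intro t ht
      simp only [Set.mem_setOf_eq] at ht
      obtain ⟨c, d, rfl⟩ := exists_glue (by omega : 2 ≤ t.size)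
      rw [size_glue] at ht
      refine Set.mem_image_of_mem glue ?_
      have hc := one_le_size c
      have hd := one_le_size d
      refine Set.mem_biUnion (Set.mem_Icc.2 ⟨hc, by omega⟩) ?_
      constructor
      · rfl
      · simp only [Set.mem_setOf_eq]; omega

open scoped Classical

noncomputable def A (n : ℕ) : Finset PlaneTree := (finite_size_eq n).toFinset

lemma mem_A {t : PlaneTree} {n : ℕ} : t ∈ A n ↔ t.size = n := by
  simp [A, Set.Finite.mem_toFinset]

noncomputable def Nc (n : ℕ) : ℕ := (A n).card

noncomputable def Ls (n : ℕ) : ℕ := ∑ t ∈ A n, t.leafCount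

lemma A_zero : A 0 = ∅ := by
  ext t
  have := one_le_size t
  simp only [mem_A, Finset.notMem_empty, iff_false]
  omega

lemma A_one : A 1 = {node []} := by
  ext t
  simp [mem_A, size_eq_one_iff]

lemma Ls_one : Ls 1 = 1 := by
  rw [Ls, A_one, Finset.sum_singleton, leafCount]

lemma Nc_one : Nc 1 = 1 := by rw [Nc, A_one, Finset.card_singleton]

lemma A_decomp {n : ℕ} (hn : 2 ≤ n) :
    A n = (Finset.Ico 1 n).biUnion (fun k => (A k ×ˢ A (n - k)).image glue) := by
  ext t
  simp only [Finset.mem_biUnion, Finset.mem_Ico, Finset.mem_image, Finset.mem_product, mem_A]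
  constructor
  · intro ht
    obtain ⟨c, d, rfl⟩ := exists_glue (t := t) (by omega)
    rw [size_glue] at ht
    have hc := one_le_size c
    have hd := one_le_size d
    refine ⟨c.size, ⟨hc, by omega⟩, ⟨c, d⟩, ⟨rfl, ?_⟩, rfl⟩
    show d.size = n - c.size
    omega
  · rintro ⟨k, ⟨hk1, hk2⟩, ⟨c, d⟩, ⟨hc, hd⟩, rfl⟩
    have hc1 := one_le_size c
    rw [size_glue, hc, hd]
    omega

lemma A_pairwise_disj {n : ℕ} :
    Set.PairwiseDisjoint ↑(Finset.Ico 1 n) (fun k => (A k ×ˢ A (n - k)).image glue) := by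
  intro k _ l _ hkl
  rw [Function.onFun, Finset.disjoint_left]
  rintro t ht ht'
  simp only [Finset.mem_image, Finset.mem_product, mem_A] at ht ht'
  obtain ⟨⟨c, d⟩, ⟨hc, hd⟩, rfl⟩ := ht
  obtain ⟨⟨c', d'⟩, ⟨hc', hd'⟩, heq⟩ := ht'
  have h2 := glue_injective heq
  have : c' = c := congrArg Prod.fst h2
  exact hkl (by rw [← hc, ← hc', this])

lemma Nc_rec {n : ℕ} (hn : 2 ≤ n) :
    Nc n = ∑ k ∈ Finset.Ico 1 n, Nc k * Nc (n - k) := by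
  rw [Nc, A_decomp hn, Finset.card_biUnion (fun x hx y hy h => A_pairwise_disj hx hy h)]
  refine Finset.sum_congr rfl fun k _ => ?_
  rw [Finset.card_image_of_injective _ glue_injective, Finset.card_product]
  rfl

lemma Ls_rec {n : ℕ} (hn : 2 ≤ n) :
    Ls n + Nc (n - 1) = ∑ k ∈ Finset.Ico 1 n, (Ls k * Nc (n - k) + Nc k * Ls (n - k)) := by
  have key : ∀ k ∈ Finset.Ico 1 n,
      (∑ p ∈ A k ×ˢ A (n - k), (glue p).leafCount) + (if k = n - 1 then Nc (n - 1) else 0)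
        = Ls k * Nc (n - k) + Nc k * Ls (n - k) := by
    intro k hk
    rw [Finset.mem_Ico] at hk
    have h1 : ∀ p ∈ A k ×ˢ A (n - k),
        (glue p).leafCount + (if n - k = 1 then 1 else 0)
          = p.1.leafCount + p.2.leafCount := by
      rintro ⟨c, d⟩ hp
      rw [Finset.mem_product, mem_A, mem_A] at hp
      have := leafCount_glue c d
      rw [hp.2] at this
      exact this
    have h2 : (∑ p ∈ A k ×ˢ A (n - k), ((glue p).leafCount + (if n - k = 1 then 1 else 0)))
        = ∑ p ∈ A k ×ˢ A (n - k), (p.1.leafCount + p.2.leafCount) :=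
      Finset.sum_congr rfl h1
    rw [Finset.sum_add_distrib, Finset.sum_const] at h2
    have h34 : ∑ p ∈ A k ×ˢ A (n - k), (p.1.leafCount + p.2.leafCount)
        = Ls k * Nc (n - k) + Nc k * Ls (n - k) := by
      rw [Finset.sum_product]
      simp only [Finset.sum_add_distrib, Finset.sum_const, smul_eq_mul]
      rw [← Finset.mul_sum]
      show Nc (n - k) * Ls k + Nc k * Ls (n - k) = _
      ring
    rw [h34] at h2
    have h5 : #(A k ×ˢ A (n - k)) • (if n - k = 1 then 1 else 0)
        = (if k = n - 1 then Nc (n - 1) else 0) := by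
      by_cases h : n - k = 1
      · have hk' : k = n - 1 := by omega
        rw [if_pos h, if_pos hk', smul_eq_mul, mul_one, Finset.card_product, h]
        rw [show #(A 1) = 1 from Nc_one, mul_one, hk']
        rfl
      · have hk' : k ≠ n - 1 := by omega
        simp [h, hk']
    rw [h5] at h2
    exact h2
  have H : ∑ k ∈ Finset.Ico 1 n,
      ((∑ p ∈ A k ×ˢ A (n - k), (glue p).leafCount) + (if k = n - 1 then Nc (n - 1) else 0))
      = ∑ k ∈ Finset.Ico 1 n, (Ls k * Nc (n - k) + Nc k * Ls (n - k)) :=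
    Finset.sum_congr rfl key
  rw [Finset.sum_add_distrib] at H
  have H1 : ∑ k ∈ Finset.Ico 1 n, ∑ p ∈ A k ×ˢ A (n - k), (glue p).leafCount = Ls n := by
    rw [Ls, A_decomp hn, Finset.sum_biUnion A_pairwise_disj]
    refine Finset.sum_congr rfl fun k _ => ?_
    rw [Finset.sum_image (fun x _ y _ h => glue_injective h)]
  have H2 : ∑ k ∈ Finset.Ico 1 n, (if k = n - 1 then Nc (n - 1) else 0) = Nc (n - 1) := by
    rw [Finset.sum_ite_eq' (Finset.Ico 1 n) (n - 1) (fun _ => Nc (n - 1))]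
    rw [if_pos (Finset.mem_Ico.2 ⟨by omega, by omega⟩)]
  rw [H1, H2] at H
  exact H

end PlaneTree

namespace PlaneTree
open Finset Nat

lemma Nc_succ_catalan : ∀ n : ℕ, Nc (n + 1) = catalan n := by
  intro n
  induction n using Nat.strong_induction_on with
  | _ n ih =>
    match n, ih with
    | 0, _ => simpa using Nc_one
    | (m + 1), ih =>
      rw [Nc_rec (by omega : 2 ≤ m + 1 + 1), Finset.sum_Ico_eq_sum_range]
      have e0 : m + 1 + 1 - 1 = m + 1 := rfl
      rw [e0, catalan_succ_range]
      refine Finset.sum_congr rfl fun i hi => ?_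
      rw [Finset.mem_range] at hi
      have e1 : 1 + i = i + 1 := by omega
      have e2 : m + 1 + 1 - (1 + i) = (m - i) + 1 := by omega
      rw [e2, e1, ih i (by omega), ih (m - i) (by omega)]

lemma two_mul_Ls : ∀ n : ℕ, 2 * Ls (n + 1) = Nat.centralBinom n + (if n = 0 then 1 else 0) := by
  intro n
  induction n using Nat.strong_induction_on with
  | _ n ih =>
    match n, ih with
    | 0, _ => simp [Ls_one, Nat.centralBinom_zero]
    | (m + 1), ih =>
      have hrec := Ls_rec (n := m + 2) (by omega)
      rw [Finset.sum_Ico_eq_sum_range] at hrec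
      have e0 : m + 2 - 1 = m + 1 := rfl
      rw [e0] at hrec
      have h2 := congrArg (2 * ·) hrec
      rw [mul_add, Finset.mul_sum] at h2
      have hterm : ∀ i ∈ Finset.range (m + 1),
          2 * (Ls (1 + i) * Nc (m + 2 - (1 + i)) + Nc (1 + i) * Ls (m + 2 - (1 + i)))
            = (Nat.centralBinom i * catalan (m - i) + catalan i * Nat.centralBinom (m - i))
              + ((if i = 0 then catalan (m - i) else 0) + (if i = m then catalan i else 0)) := by
        intro i hi
        rw [Finset.mem_range] at hi
        have e1 : 1 + i = i + 1 := by omega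
        have e2 : m + 2 - (1 + i) = (m - i) + 1 := by omega
        rw [e2, e1, Nc_succ_catalan i, Nc_succ_catalan (m - i)]
        have hA := ih i (by omega)
        have hB := ih (m - i) (by omega)
        calc 2 * (Ls (i + 1) * catalan (m - i) + catalan i * Ls ((m - i) + 1))
            = (2 * Ls (i + 1)) * catalan (m - i) + catalan i * (2 * Ls ((m - i) + 1)) := by
              ring
          _ = (Nat.centralBinom i + (if i = 0 then 1 else 0)) * catalan (m - i)
              + catalan i * (Nat.centralBinom (m - i) + (if m - i = 0 then 1 else 0)) := by
              rw [hA, hB]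
          _ = _ := by
              have e3 : (m - i = 0) = (i = m) := by
                apply propext
                constructor <;> intro h <;> omega
              simp only [e3]
              by_cases h0 : i = 0 <;> by_cases hm : i = m <;> simp [h0, hm] <;> ring
      rw [Finset.sum_congr rfl hterm] at h2
      rw [Finset.sum_add_distrib, Finset.sum_add_distrib, Finset.sum_add_distrib] at h2
      -- evaluate the two ite sums
      have hi1 : ∑ i ∈ Finset.range (m + 1), (if i = 0 then catalan (m - i) else 0)
          = catalan m := by
        rw [Finset.sum_ite_eq' (Finset.range (m + 1)) 0 (fun i => catalan (m - i))]
        simp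
      have hi2 : ∑ i ∈ Finset.range (m + 1), (if i = m then catalan i else 0)
          = catalan m := by
        rw [Finset.sum_ite_eq' (Finset.range (m + 1)) m (fun i => catalan i)]
        simp
      -- reflect the second convolution
      have hrefl : ∑ i ∈ Finset.range (m + 1), catalan i * Nat.centralBinom (m - i)
          = ∑ i ∈ Finset.range (m + 1), Nat.centralBinom i * catalan (m - i) := by
        rw [← Finset.sum_range_reflect (fun i => catalan i * Nat.centralBinom (m - i)) (m + 1)]
        refine Finset.sum_congr rfl fun j hj => ?_
        rw [Finset.mem_range] at hj
        have e1 : m + 1 - 1 - j = m - j := by omega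
        have e2 : m - (m - j) = j := by omega
        rw [e1, e2, mul_comm]
      rw [hi1, hi2, hrefl, Nc_succ_catalan m] at h2
      have hkey := key_identity m
      show 2 * Ls (m + 2) = Nat.centralBinom (m + 1) + (if m + 1 = 0 then 1 else 0)
      simp only [Nat.succ_ne_zero, if_false, add_zero]
      omega

end PlaneTree

section Analytic
open Finset Nat

lemma centralBinom_le_four_pow (j : ℕ) : Nat.centralBinom j ≤ 4 ^ j := by
  have h2 : Nat.centralBinom j ≤ ∑ m ∈ Finset.range (2 * j + 1), (2 * j).choose m :=
    Finset.single_le_sum (f := fun m => (2 * j).choose m) (fun _ _ => Nat.zero_le _)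
      (Finset.mem_range.2 (by omega))
  rw [Nat.sum_range_choose] at h2
  calc Nat.centralBinom j ≤ 2 ^ (2 * j) := h2
    _ = 4 ^ j := by rw [pow_mul]; norm_num

lemma centralBinom_succ_le (n : ℕ) : Nat.centralBinom (n + 1) ≤ 4 * Nat.centralBinom n := by
  have h := Nat.succ_mul_centralBinom_succ n
  have h2 : (n + 1) * Nat.centralBinom (n + 1) ≤ (n + 1) * (4 * Nat.centralBinom n) := by
    rw [h]; ring_nf; nlinarith [Nat.centralBinom_pos n]
  exact Nat.le_of_mul_le_mul_left h2 (by omega)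

lemma centralBinom_hasSum {z : ℝ} (hz : |z| < 1 / 4) :
    HasSum (fun j : ℕ => (Nat.centralBinom j : ℝ) * z ^ j) (1 / Real.sqrt (1 - 4 * z)) := by
  set t : ℕ → ℝ := fun j => (Nat.centralBinom j : ℝ) * z ^ j with ht_def
  have hB4 : ∀ j : ℕ, (Nat.centralBinom j : ℝ) ≤ 4 ^ j := by
    intro j
    exact_mod_cast Nat.cast_le.2 (_root_.centralBinom_le_four_pow j)
  have habs : ∀ j, ‖t j‖ ≤ (4 * |z|) ^ j := by
    intro j
    rw [ht_def]
    simp only [norm_mul, norm_pow, Real.norm_eq_abs]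
    rw [abs_of_nonneg (by positivity : (0:ℝ) ≤ (Nat.centralBinom j : ℝ)), mul_pow]
    exact mul_le_mul_of_nonneg_right (hB4 j) (pow_nonneg (abs_nonneg z) j)
  have h4z : 4 * |z| < 1 := by linarith
  have hgeo : Summable (fun j : ℕ => (4 * |z|) ^ j) :=
    summable_geometric_of_lt_one (by positivity) h4z
  have hnorm : Summable (fun j => ‖t j‖) :=
    Summable.of_nonneg_of_le (fun j => norm_nonneg _) habs hgeo
  have hsummable : Summable t := hnorm.of_norm
  set s : ℝ := ∑' j, t j with hs_def
  have ht : HasSum t s := hsummable.hasSum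
  have h1z : 0 < 1 - 4 * z := by
    have := (abs_lt.1 hz).2
    linarith
  -- Cauchy product : s * s = (1 - 4z)⁻¹
  have hmul := tsum_mul_tsum_eq_tsum_sum_range_of_summable_norm hnorm hnorm
  have inner : ∀ n : ℕ, ∑ k ∈ Finset.range (n + 1), t k * t (n - k) = (4 * z) ^ n := by
    intro n
    have hterm : ∀ k ∈ Finset.range (n + 1), t k * t (n - k)
        = ((Nat.centralBinom k * Nat.centralBinom (n - k) : ℕ) : ℝ) * z ^ n := by
      intro k hk
      rw [Finset.mem_range] at hk
      have e : z ^ k * z ^ (n - k) = z ^ n := by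
        rw [← pow_add]
        congr 1
        omega
      push_cast
      calc (Nat.centralBinom k : ℝ) * z ^ k * ((Nat.centralBinom (n - k) : ℝ) * z ^ (n - k))
          = (Nat.centralBinom k : ℝ) * (Nat.centralBinom (n - k) : ℝ) * (z ^ k * z ^ (n - k)) := by
            ring
        _ = _ := by rw [e]
    rw [Finset.sum_congr rfl hterm, ← Finset.sum_mul, ← Nat.cast_sum, centralBinom_conv n]
    push_cast
    rw [mul_pow]
  have hsq : s * s = (1 - 4 * z)⁻¹ := by
    rw [hmul]
    have : ∀ n : ℕ, (∑ k ∈ Finset.range (n + 1), t k * t (n - k)) = (4 * z) ^ n := inner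
    rw [tsum_congr this]
    exact tsum_geometric_of_abs_lt_one (by rw [abs_mul, abs_of_nonneg]; linarith; norm_num)
  -- positivity of s
  have hspos : 0 < s := by
    have hinj2 : Function.Injective (fun k : ℕ => 2 * k) := fun a b h => by
      have : 2 * a = 2 * b := h
      omega
    have hinj21 : Function.Injective (fun k : ℕ => 2 * k + 1) := fun a b h => by
      have : 2 * a + 1 = 2 * b + 1 := h
      omega
    have he : Summable (fun k => t (2 * k)) := hsummable.comp_injective hinj2
    have ho : Summable (fun k => t (2 * k + 1)) := hsummable.comp_injective hinj21
    have heo : HasSum t (∑' k, t (2 * k) + ∑' k, t (2 * k + 1)) :=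
      HasSum.even_add_odd he.hasSum ho.hasSum
    have hseq : s = ∑' k, t (2 * k) + ∑' k, t (2 * k + 1) := ht.unique heo
    have hpair : HasSum (fun k => t (2 * k) + t (2 * k + 1)) s := by
      rw [hseq]
      exact he.hasSum.add ho.hasSum
    have hnonneg : ∀ k : ℕ, 0 ≤ t (2 * k) + t (2 * k + 1) := by
      intro k
      have h1 : |t (2 * k + 1)| ≤ t (2 * k) := by
        rw [ht_def]
        simp only [abs_mul, abs_pow, abs_of_nonneg (by positivity :
          (0:ℝ) ≤ (Nat.centralBinom (2 * k + 1) : ℝ))]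
        have hb : (Nat.centralBinom (2 * k + 1) : ℝ) ≤ 4 * Nat.centralBinom (2 * k) := by
          exact_mod_cast Nat.cast_le.2 (centralBinom_succ_le (2 * k))
        have hzp : |z| ^ (2 * k + 1) = |z| ^ (2 * k) * |z| := by rw [pow_succ]
        have hz2k : z ^ (2 * k) = |z| ^ (2 * k) := by
          rw [← abs_pow, abs_of_nonneg ((even_two_mul k).pow_nonneg z)]
        rw [hzp, hz2k]
        calc (Nat.centralBinom (2 * k + 1) : ℝ) * (|z| ^ (2 * k) * |z|)
            ≤ (4 * Nat.centralBinom (2 * k)) * (|z| ^ (2 * k) * |z|) := by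
              apply mul_le_mul_of_nonneg_right hb
              positivity
          _ = (Nat.centralBinom (2 * k) : ℝ) * |z| ^ (2 * k) * (4 * |z|) := by ring
          _ ≤ (Nat.centralBinom (2 * k) : ℝ) * |z| ^ (2 * k) * 1 := by
              apply mul_le_mul_of_nonneg_left h4z.le
              positivity
          _ = (Nat.centralBinom (2 * k) : ℝ) * |z| ^ (2 * k) := by ring
      have := neg_abs_le (t (2 * k + 1))
      linarith [h1, this]
    have h0le : t 0 + t 1 ≤ s := le_hasSum hpair 0 (fun j _ => hnonneg j)
    have ht0 : t 0 = 1 := by rw [ht_def]; simp [Nat.centralBinom_zero]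
    have ht1 : t 1 = 2 * z := by
      show (Nat.centralBinom 1 : ℝ) * z ^ 1 = 2 * z
      have : Nat.centralBinom 1 = 2 := by decide
      rw [this]
      norm_num
    have : -(1/4 : ℝ) < z := (abs_lt.1 hz).1
    rw [ht0, ht1] at h0le
    linarith
  have hfinal : s = 1 / Real.sqrt (1 - 4 * z) := by
    have hsq' : s ^ 2 = (1 - 4 * z)⁻¹ := by rw [sq]; exact hsq
    have h1 : Real.sqrt (s ^ 2) = s := Real.sqrt_sq hspos.le
    rw [← h1, hsq', Real.sqrt_inv, one_div]
  rw [← hfinal]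
  exact ht

end Analytic

namespace PlaneTree

lemma Ls_zero : Ls 0 = 0 := by
  rw [Ls, A_zero, Finset.sum_empty]

lemma finsum_eq_Ls (n : ℕ) :
    (∑ᶠ t ∈ {t : PlaneTree | t.size = n}, t.leafCount) = Ls n := by
  rw [finsum_mem_eq_finite_toFinset_sum _ (finite_size_eq n)]
  rfl

lemma Ls_hasSum {z : ℝ} (hz : |z| < 1 / 4) :
    HasSum (fun m : ℕ => (Ls m : ℝ) * z ^ m)
      (z / 2 * (1 + 1 / Real.sqrt (1 - 4 * z))) := by
  have hcb := centralBinom_hasSum hz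
  set s : ℝ := 1 / Real.sqrt (1 - 4 * z) with hs_def
  have h1 : HasSum (fun j : ℕ => z / 2 * ((Nat.centralBinom j : ℝ) * z ^ j)) (z / 2 * s) :=
    hcb.mul_left _
  have h2 : HasSum (fun j : ℕ => if j = 0 then z / 2 else 0) (z / 2) :=
    hasSum_ite_eq 0 (z / 2)
  have h3 := h1.add h2
  have heq : ∀ j : ℕ, (Ls (j + 1) : ℝ) * z ^ (j + 1)
      = z / 2 * ((Nat.centralBinom j : ℝ) * z ^ j) + (if j = 0 then z / 2 else 0) := by
    intro j
    cases j with
    | zero =>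
      rw [Ls_one]
      simp [Nat.centralBinom_zero]
    | succ k =>
      rw [if_neg (Nat.succ_ne_zero k), add_zero]
      have h2m : 2 * Ls (k + 1 + 1) = Nat.centralBinom (k + 1) := by
        rw [two_mul_Ls (k + 1)]
        simp
      have hcast : (2 : ℝ) * (Ls (k + 1 + 1) : ℝ) = (Nat.centralBinom (k + 1) : ℝ) := by
        exact_mod_cast congrArg (fun x : ℕ => (x : ℝ)) h2m
      have hL : (Ls (k + 1 + 1) : ℝ) = (Nat.centralBinom (k + 1) : ℝ) / 2 := by
        linarith
      rw [hL, pow_succ]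
      ring
  have h4 : HasSum (fun j : ℕ => (Ls (j + 1) : ℝ) * z ^ (j + 1)) (z / 2 * s + z / 2) :=
    HasSum.congr_fun h3 heq
  have h5 := (hasSum_nat_add_iff (f := fun m : ℕ => (Ls m : ℝ) * z ^ m) 1).1 h4
  have hval : z / 2 * s + z / 2 + ∑ i ∈ Finset.range 1, (Ls i : ℝ) * z ^ i
      = z / 2 * (1 + s) := by
    rw [Finset.sum_range_one, Ls_zero]
    push_cast
    ring
  rw [hval] at h5
  exact h5

end PlaneTree

/-- The total number of leaves over all rooted plane trees with `n` vertices is the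
coefficient of `z^n` in `(z/2)(1 + 1/√(1-4z))`; it equals `(1/2)·binom(2n-2, n-1)` for
`n ≥ 2` and `1` for `n = 1`. -/
theorem total_leaf_count (n : ℕ) (hn : 1 ≤ n) :
    (∀ z : ℝ, |z| < 1 / 4 →
      HasSum
        (fun m : ℕ =>
          ((∑ᶠ t ∈ {t : PlaneTree | t.size = m}, t.leafCount : ℕ) : ℝ) * z ^ m)
        (z / 2 * (1 + 1 / Real.sqrt (1 - 4 * z)))) ∧
    (n = 1 → ∑ᶠ t ∈ {t : PlaneTree | t.size = n}, t.leafCount = 1) ∧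
    (2 ≤ n →
      2 * ∑ᶠ t ∈ {t : PlaneTree | t.size = n}, t.leafCount =
        Nat.choose (2 * n - 2) (n - 1)) := by
  refine ⟨?_, ?_, ?_⟩
  · intro z hz
    have h := PlaneTree.Ls_hasSum hz
    simpa only [PlaneTree.finsum_eq_Ls] using h
  · intro h
    subst h
    rw [PlaneTree.finsum_eq_Ls, PlaneTree.Ls_one]
  · intro h
    rw [PlaneTree.finsum_eq_Ls]
    have h2m := PlaneTree.two_mul_Ls (n - 1)
    have e : n - 1 + 1 = n := by omega
    rw [e, if_neg (by omega : ¬ n - 1 = 0), add_zero] at h2m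
    rw [h2m, Nat.centralBinom_eq_two_mul_choose]
    congr 1
    omega
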